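/- arXiv:1108.2063 — 6 statements merged into one kernel-verified Lean document; each statement's English description precedes it below -/
import Mathlib

section
/- Let P ⊆ ℝ² be a finite set and let V be a V-shape covering P with width(V) > 0. If P is entirely contained in one of the two strips of V (i.e., P ⊆ S₁(V) or P ⊆ S₂(V)), then V does not have minimum width: there exists a V-shape V' covering P with width(V') < width(V). -/
open Set Metric

noncomputable section

/-- Points of the plane. -/
abbrev Pt : Type := EuclideanSpace ℝ (Fin 2)

/-- The real inner product of two vectors of the plane. -/
def iprod (p q : Pt) : ℝ := inner ℝ p q

/-- The ray emanating from `p` in direction `u`. -/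
def ray (p u : Pt) : Set Pt := {q | ∃ t : ℝ, 0 ≤ t ∧ q = p + t • u}

/-- The line through `p` with direction `u`. -/
def lineThrough (p u : Pt) : Set Pt := {q | ∃ t : ℝ, q = p + t • u}

/-- A V-shape: two vertices `x ≠ y` and two nonzero direction vectors `u₁, u₂` lying in
opposite closed half-planes determined by the direction `y - x` (witnessed by a unit
normal `n` of `y - x` with `⟪u₁, n⟫ ≥ 0 ≥ ⟪u₂, n⟫`). -/
structure VShape where
  x : Pt
  y : Pt
  u₁ : Pt
  u₂ : Pt
  n : Pt
  hxy : x ≠ y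
  hu₁ : u₁ ≠ 0
  hu₂ : u₂ ≠ 0
  hn : ‖n‖ = 1
  hperp : iprod (y - x) n = 0
  hside₁ : 0 ≤ iprod u₁ n
  hside₂ : iprod u₂ n ≤ 0

namespace VShape

/-- Direction of the `i`-th arm (`i = 0, 1` standing for `1, 2`). -/
def dir (V : VShape) : Fin 2 → Pt := ![V.u₁, V.u₂]

/-- The `i`-th arm: convex hull of the two parallel rays `Xᵢ` (from `x`) and `Yᵢ` (from `y`). -/
def arm (V : VShape) (i : Fin 2) : Set Pt :=
  convexHull ℝ (ray V.x (V.dir i) ∪ ray V.y (V.dir i))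

/-- The V-shape as a subset of the plane: the union of its two arms. -/
def carrier (V : VShape) : Set Pt := V.arm 0 ∪ V.arm 1

/-- The `i`-th strip: the closed region between the parallel lines `x + ℝ•uᵢ` and `y + ℝ•uᵢ`. -/
def strip (V : VShape) (i : Fin 2) : Set Pt :=
  convexHull ℝ (lineThrough V.x (V.dir i) ∪ lineThrough V.y (V.dir i))

/-- Width of the `i`-th arm: the distance between the two parallel boundary lines. -/
def armWidth (V : VShape) (i : Fin 2) : ℝ :=
  Metric.infDist V.x (lineThrough V.y (V.dir i))

/-- Width of a V-shape: the larger of the two arm widths. -/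
def width (V : VShape) : ℝ := max (V.armWidth 0) (V.armWidth 1)

/-- A V-shape covers a set `P` if `P` is contained in it. -/
def covers (V : VShape) (P : Set Pt) : Prop := P ⊆ V.carrier

end VShape

/-- `S` is a closed strip of width `w`: the closed region between two parallel lines at
distance `w`, described by a unit normal vector `v` and an offset `c`. -/
def IsStrip (S : Set Pt) (w : ℝ) : Prop :=
  0 ≤ w ∧ ∃ (v : Pt) (c : ℝ), ‖v‖ = 1 ∧ S = {p | c ≤ iprod p v ∧ iprod p v ≤ c + w}



/-- Auxiliary: a point of the form `x + s • (y - x) + t • u` with `s ∈ [0,1]`, `t ≥ 0`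
belongs to the convex hull of the two parallel rays from `x` and `y` in direction `u`. -/
lemma mem_hull_rays {x y u : Pt} (s t : ℝ) (hs0 : 0 ≤ s) (hs1 : s ≤ 1) (ht : 0 ≤ t) :
    x + s • (y - x) + t • u ∈ convexHull ℝ (ray x u ∪ ray y u) := by
  have h1 : x + t • u ∈ convexHull ℝ (ray x u ∪ ray y u) :=
    subset_convexHull ℝ _ (Or.inl ⟨t, ht, rfl⟩)
  have h2 : y + t • u ∈ convexHull ℝ (ray x u ∪ ray y u) :=
    subset_convexHull ℝ _ (Or.inr ⟨t, ht, rfl⟩)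
  have h := (convex_convexHull ℝ (ray x u ∪ ray y u)) h1 h2 (sub_nonneg.2 hs1) hs0 (by ring)
  convert h using 1
  module

/-- Auxiliary: lower bound for the distance from a point to a line, via a unit vector
orthogonal to the direction of the line. -/
lemma abs_inner_le_infDist_line (x y d v : Pt) (hnv : ‖v‖ = 1) (hdv : iprod d v = 0) :
    |iprod (x - y) v| ≤ Metric.infDist x (lineThrough y d) := by
  rw [← not_lt]
  intro hlt
  obtain ⟨q, ⟨t, rfl⟩, hdq⟩ :=
    (Metric.infDist_lt_iff (⟨y + (0:ℝ) • d, 0, rfl⟩ : (lineThrough y d).Nonempty)).mp hlt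
  have h1 : iprod (x - (y + t • d)) v = iprod (x - y) v := by
    simp only [iprod, inner_sub_left, inner_add_left, real_inner_smul_left] at *
    rw [hdv]; ring
  have h2 : |iprod (x - y) v| ≤ dist x (y + t • d) := by
    calc |iprod (x - y) v| = |iprod (x - (y + t • d)) v| := by rw [h1]
      _ ≤ ‖x - (y + t • d)‖ * ‖v‖ := abs_real_inner_le_norm _ _
      _ = dist x (y + t • d) := by rw [hnv, mul_one, dist_eq_norm]
  linarith

set_option maxHeartbeats 1600000 in
/-- If a positive-width V-shape `V` covers a finite set `P` and one of its two
strips already contains `P` entirely, then `V` does not have minimum width. -/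
theorem statement0 (P : Set Pt) (hPfin : P.Finite) (V : VShape)
    (hcov : V.covers P) (hw : 0 < V.width)
    (hsub : P ⊆ V.strip 0 ∨ P ⊆ V.strip 1) :
    ∃ V' : VShape, V'.covers P ∧ V'.width < V.width := by
  classical
  -- choose the strip containing `P`
  obtain ⟨i, hPi⟩ : ∃ i : Fin 2, P ⊆ V.strip i := by
    rcases hsub with h | h
    · exact ⟨0, h⟩
    · exact ⟨1, h⟩
  have hdne : V.dir i ≠ 0 := by
    fin_cases i
    · simpa [VShape.dir] using V.hu₁
    · simpa [VShape.dir] using V.hu₂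
  have harmle : V.armWidth i ≤ V.width := by
    fin_cases i
    · exact le_max_left _ _
    · exact le_max_right _ _
  set d : Pt := V.dir i with hd
  set W : ℝ := V.width with hWdef
  -- orthonormal frame (dL, v) adapted to the strip direction
  set σ : ℝ := ‖d‖ with hσdef
  have hσ : 0 < σ := norm_pos_iff.mpr hdne
  have hinner : ∀ z w : Pt, iprod z w = z 0 * w 0 + z 1 * w 1 := by
    intro z w
    simp [iprod, PiLp.inner_apply, RCLike.inner_apply, conj_trivial, Fin.sum_univ_two]
    ring
  have hσ2 : σ ^ 2 = d 0 ^ 2 + d 1 ^ 2 := by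
    rw [hσdef, ← real_inner_self_eq_norm_sq]
    rw [show (inner ℝ d d : ℝ) = iprod d d from rfl, hinner]; ring
  set rotd : Pt := (WithLp.equiv 2 (Fin 2 → ℝ)).symm ![-(d 1), d 0] with hrot
  have hr0 : rotd 0 = -(d 1) := by simp [hrot]
  have hr1 : rotd 1 = d 0 := by simp [hrot]
  set dL : Pt := σ⁻¹ • d with hdL
  set v : Pt := σ⁻¹ • rotd with hv
  have hdL0 : dL 0 = σ⁻¹ * d 0 := rfl
  have hdL1 : dL 1 = σ⁻¹ * d 1 := rfl
  have hv0 : v 0 = σ⁻¹ * -(d 1) := by rw [hv]; simp [hr0]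
  have hv1 : v 1 = σ⁻¹ * d 0 := by rw [hv]; simp [hr1]
  have hdLdL : iprod dL dL = 1 := by
    rw [hinner, hdL0, hdL1]; field_simp; linear_combination -hσ2
  have hvv : iprod v v = 1 := by
    rw [hinner, hv0, hv1]; field_simp; linear_combination -hσ2
  have hdLv : iprod dL v = 0 := by
    rw [hinner, hdL0, hdL1, hv0, hv1]; ring
  have hdv : iprod d v = 0 := by
    rw [hinner, hv0, hv1]; ring
  have hnv : ‖v‖ = 1 := by
    have h : ‖v‖ ^ 2 = 1 := by
      rw [← real_inner_self_eq_norm_sq]; exact hvv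
    have h1 : (‖v‖ - 1) * (‖v‖ + 1) = 0 := by linear_combination h
    rcases mul_eq_zero.mp h1 with h2 | h2
    · linarith
    · have := norm_nonneg v; linarith
  have hexp : ∀ z : Pt, z = (iprod z dL) • dL + (iprod z v) • v := by
    intro z
    ext j
    fin_cases j
    · show z 0 = ((iprod z dL) • dL + (iprod z v) • v) 0
      rw [PiLp.add_apply, PiLp.smul_apply, PiLp.smul_apply, smul_eq_mul, smul_eq_mul,
        hinner z dL, hinner z v, hdL0, hdL1, hv0, hv1]
      simp only [PiLp.smul_apply, smul_eq_mul, hv0, hv1]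
      field_simp
      linear_combination (z 0) * hσ2
    · show z 1 = ((iprod z dL) • dL + (iprod z v) • v) 1
      rw [PiLp.add_apply, PiLp.smul_apply, PiLp.smul_apply, smul_eq_mul, smul_eq_mul,
        hinner z dL, hinner z v, hdL0, hdL1, hv0, hv1]
      simp only [PiLp.smul_apply, smul_eq_mul, hv0, hv1]
      field_simp
      linear_combination (z 1) * hσ2
  have harmw : V.armWidth i = Metric.infDist V.x (lineThrough V.y d) := by
    unfold VShape.armWidth; rw [← hd]
  have hstripi : V.strip i
      = convexHull ℝ (lineThrough V.x d ∪ lineThrough V.y d) := by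
    unfold VShape.strip; rw [← hd]
  -- from now on, only the abstract properties of the frame are used
  clear_value d W dL v
  clear hd hσdef hrot hr0 hr1 hdL hv hdL0 hdL1 hv0 hv1 hσ2 hinner
  clear_value σ rotd
  -- the slab containing `P`
  obtain ⟨c₁, hc₁⟩ : ∃ c : ℝ, c = min (iprod V.x v) (iprod V.y v) := ⟨_, rfl⟩
  obtain ⟨c₂, hc₂⟩ : ∃ c : ℝ, c = max (iprod V.x v) (iprod V.y v) := ⟨_, rfl⟩
  have hslab : ∀ p ∈ P, c₁ ≤ iprod p v ∧ iprod p v ≤ c₂ := by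
    intro p hp
    have hCconv : Convex ℝ {q : Pt | c₁ ≤ iprod q v ∧ iprod q v ≤ c₂} := by
      intro q hq r hr α β hα hβ hαβ
      have hqr : iprod (α • q + β • r) v = α * iprod q v + β * iprod r v := by
        simp only [iprod, inner_add_left, real_inner_smul_left]
      simp only [mem_setOf_eq] at hq hr ⊢
      rw [hqr]
      have h1 : α * c₁ ≤ α * iprod q v := mul_le_mul_of_nonneg_left hq.1 hα
      have h2 : β * c₁ ≤ β * iprod r v := mul_le_mul_of_nonneg_left hr.1 hβ
      have h3 : α * iprod q v ≤ α * c₂ := mul_le_mul_of_nonneg_left hq.2 hα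
      have h4 : β * iprod r v ≤ β * c₂ := mul_le_mul_of_nonneg_left hr.2 hβ
      have h5 : α * c₁ + β * c₁ = c₁ := by linear_combination c₁ * hαβ
      have h6 : α * c₂ + β * c₂ = c₂ := by linear_combination c₂ * hαβ
      constructor <;> linarith
    have hsub2 : V.strip i ⊆ {q : Pt | c₁ ≤ iprod q v ∧ iprod q v ≤ c₂} := by
      rw [hstripi]
      apply convexHull_min _ hCconv
      have haux : ∀ z : Pt, ∀ t : ℝ, iprod (z + t • d) v = iprod z v := by
        intro z t
        simp only [iprod, inner_add_left, real_inner_smul_left]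
        rw [show (inner ℝ d v : ℝ) = 0 from hdv]; ring
      rintro q (⟨t, rfl⟩ | ⟨t, rfl⟩) <;> simp only [mem_setOf_eq] <;> rw [haux, hc₁, hc₂]
      · exact ⟨min_le_left _ _, le_max_left _ _⟩
      · exact ⟨min_le_right _ _, le_max_right _ _⟩
    exact hsub2 (hPi hp)
  obtain ⟨len, hlendef⟩ : ∃ l : ℝ, l = c₂ - c₁ := ⟨_, rfl⟩
  have hlen0 : 0 ≤ len := by rw [hlendef, hc₁, hc₂]; simpa using min_le_max
  have hlenW : len ≤ W := by
    have h1 : len = |iprod (V.x - V.y) v| := by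
      have h2 : iprod (V.x - V.y) v = iprod V.x v - iprod V.y v := by
        simp [iprod, inner_sub_left]
      rw [h2, hlendef, hc₁, hc₂, max_sub_min_eq_abs, abs_sub_comm]
    have h3 := abs_inner_le_infDist_line V.x V.y d v hnv hdv
    rw [h1]
    rw [harmw] at harmle
    linarith
  have hW : 0 < W := hw
  -- horizontal extent of `P`
  obtain ⟨M, hM0, hM⟩ : ∃ M : ℝ, 0 ≤ M ∧ ∀ p ∈ P, |iprod p dL| ≤ M := by
    obtain ⟨M₀, hM₀⟩ := (hPfin.image (fun p => |iprod p dL|)).bddAbove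
    exact ⟨max M₀ 0, le_max_right _ _, fun p hp =>
      le_trans (hM₀ (Set.mem_image_of_mem _ hp)) (le_max_left _ _)⟩
  -- parameters of the new V-shape
  obtain ⟨m, hm⟩ : ∃ m : ℝ, m = (c₁ + c₂) / 2 := ⟨_, rfl⟩
  obtain ⟨e, he_def⟩ : ∃ e : ℝ, e = (4 * M + 2) / W := ⟨_, rfl⟩
  have he : 0 < e := by rw [he_def]; positivity
  have hWe : W * e = 4 * M + 2 := by
    rw [he_def]; field_simp
  obtain ⟨L, hLdef⟩ : ∃ L : ℝ, L = 2 * M + e * len / 2 + 1 := ⟨_, rfl⟩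
  have hL : 0 < L := by
    have := mul_nonneg he.le hlen0
    rw [hLdef]; linarith
  have hLe : L ≤ W * e := by
    have h7 : e * len ≤ e * W := mul_le_mul_of_nonneg_left hlenW he.le
    rw [hLdef, hWe]
    linarith [h7, hWe]
  obtain ⟨x', hx'⟩ : ∃ p : Pt, p = (-(M + e * len / 2)) • dL + m • v := ⟨_, rfl⟩
  obtain ⟨y', hy'⟩ : ∃ p : Pt, p = x' + L • dL := ⟨_, rfl⟩
  obtain ⟨w₁, hw₁⟩ : ∃ p : Pt, p = e • dL + v := ⟨_, rfl⟩
  obtain ⟨w₂, hw₂⟩ : ∃ p : Pt, p = e • dL - v := ⟨_, rfl⟩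
  have hyx : y' - x' = L • dL := by rw [hy']; exact add_sub_cancel_left _ _
  have hw₁v : iprod w₁ v = 1 := by
    rw [hw₁, show iprod (e • dL + v) v = e * iprod dL v + iprod v v from by
      simp only [iprod, inner_add_left, real_inner_smul_left]]
    rw [hdLv, hvv]; ring
  have hw₂v : iprod w₂ v = -1 := by
    rw [hw₂, show iprod (e • dL - v) v = e * iprod dL v - iprod v v from by
      simp only [iprod, inner_sub_left, real_inner_smul_left]]
    rw [hdLv, hvv]; ring
  have hdLne : dL ≠ 0 := by
    intro h
    rw [h] at hdLdL
    simp [iprod] at hdLdL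
  have hxyne : x' ≠ y' := by
    intro h
    have h2 : L • dL = 0 := by
      have h3 := hyx
      rw [← h] at h3
      simpa using h3.symm
    rcases smul_eq_zero.mp h2 with h3 | h3
    · exact hL.ne' h3
    · exact hdLne h3
  have hw₁ne : w₁ ≠ 0 := by
    intro h
    rw [h] at hw₁v
    simp [iprod] at hw₁v
  have hw₂ne : w₂ ≠ 0 := by
    intro h
    rw [h] at hw₂v
    simp [iprod] at hw₂v
  have hperp' : iprod (y' - x') v = 0 := by
    rw [hyx, show iprod (L • dL) v = L * iprod dL v from by
      simp only [iprod, real_inner_smul_left]]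
    rw [hdLv]; ring
  have hnorm2 : ∀ α γ : ℝ, ‖α • dL + γ • v‖ ^ 2 = α ^ 2 + γ ^ 2 := by
    intro α γ
    rw [← real_inner_self_eq_norm_sq]
    have hvdL : iprod v dL = 0 := by rw [iprod, real_inner_comm]; exact hdLv
    rw [show (inner ℝ (α • dL + γ • v) (α • dL + γ • v) : ℝ)
        = α * (α * iprod dL dL) + α * (γ * iprod v dL)
          + (γ * (α * iprod dL v) + γ * (γ * iprod v v)) from by
      simp only [iprod, inner_add_left, inner_add_right, real_inner_smul_left,
        real_inner_smul_right]]
    rw [hdLdL, hvv, hdLv, hvdL]; ring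
  -- the new V-shape
  refine ⟨⟨x', y', w₁, w₂, v, hxyne, hw₁ne, hw₂ne, hnv, hperp',
      by rw [hw₁v]; norm_num, by rw [hw₂v]; norm_num⟩, ?_, ?_⟩
  · -- covering
    intro p hp
    obtain ⟨hb1, hb2⟩ := hslab p hp
    have ha := abs_le.mp (hM p hp)
    have hc2m : c₂ - m = len / 2 := by rw [hm, hlendef]; ring
    have hmc1 : m - c₁ = len / 2 := by rw [hm, hlendef]; ring
    show p ∈ VShape.carrier _
    simp only [VShape.carrier, VShape.arm, VShape.dir, Matrix.cons_val_zero,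
      Matrix.cons_val_one, Matrix.head_cons]
    by_cases hbm : m ≤ iprod p v
    · left
      have ht : 0 ≤ iprod p v - m := sub_nonneg.2 hbm
      have hnum0 : 0 ≤ iprod p dL + M + e * len / 2 - e * (iprod p v - m) := by
        have h5 : e * (iprod p v - m) ≤ e * (len / 2) :=
          mul_le_mul_of_nonneg_left (by linarith) he.le
        linarith [ha.1]
      have hnum1 : iprod p dL + M + e * len / 2 - e * (iprod p v - m) ≤ L := by
        have h5 : 0 ≤ e * (iprod p v - m) := mul_nonneg he.le ht
        rw [hLdef]; linarith [ha.2]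
      have hkey : p = x' + ((iprod p dL + M + e * len / 2 - e * (iprod p v - m)) / L)
          • (y' - x') + (iprod p v - m) • w₁ := by
        conv_lhs => rw [hexp p]
        rw [hyx, hx', hw₁]
        match_scalars
        · field_simp
          ring
        · ring
      rw [hkey]
      exact mem_hull_rays _ _ (div_nonneg hnum0 hL.le) ((div_le_one hL).mpr hnum1) ht
    · right
      push_neg at hbm
      have ht : 0 ≤ m - iprod p v := by linarith
      have hnum0 : 0 ≤ iprod p dL + M + e * len / 2 - e * (m - iprod p v) := by
        have h5 : e * (m - iprod p v) ≤ e * (len / 2) :=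
          mul_le_mul_of_nonneg_left (by linarith) he.le
        linarith [ha.1]
      have hnum1 : iprod p dL + M + e * len / 2 - e * (m - iprod p v) ≤ L := by
        have h5 : 0 ≤ e * (m - iprod p v) := mul_nonneg he.le ht
        rw [hLdef]; linarith [ha.2]
      have hkey : p = x' + ((iprod p dL + M + e * len / 2 - e * (m - iprod p v)) / L)
          • (y' - x') + (m - iprod p v) • w₂ := by
        conv_lhs => rw [hexp p]
        rw [hyx, hx', hw₂]
        match_scalars
        · field_simp
          ring
        · ring
      rw [hkey]
      exact mem_hull_rays _ _ (div_nonneg hnum0 hL.le) ((div_le_one hL).mpr hnum1) ht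
  · -- width
    have harm : ∀ u : Pt, (∃ ε : ℝ, ε ^ 2 = 1 ∧ u = e • dL + ε • v) →
        Metric.infDist x' (lineThrough y' u) < W := by
      rintro u ⟨ε, hε2, rfl⟩
      set t₀ : ℝ := -(L * e) / (1 + e ^ 2) with ht₀
      have hne : (0:ℝ) < 1 + e ^ 2 := by positivity
      have hmem : y' + t₀ • (e • dL + ε • v) ∈ lineThrough y' (e • dL + ε • v) := ⟨t₀, rfl⟩
      refine lt_of_le_of_lt (Metric.infDist_le_dist_of_mem hmem) ?_
      rw [dist_eq_norm]
      have hvec : x' - (y' + t₀ • (e • dL + ε • v))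
          = (-L - t₀ * e) • dL + (-(t₀ * ε)) • v := by
        rw [hy']
        module
      rw [hvec]
      have h2 := hnorm2 (-L - t₀ * e) (-(t₀ * ε))
      have hL2 : L ^ 2 < W ^ 2 * (1 + e ^ 2) := by nlinarith
      have hval : (-L - t₀ * e) ^ 2 + (-(t₀ * ε)) ^ 2 = L ^ 2 / (1 + e ^ 2) := by
        rw [ht₀]
        field_simp
        linear_combination e ^ 2 * hε2
      have hval2 : (-L - t₀ * e) ^ 2 + (-(t₀ * ε)) ^ 2 < W ^ 2 := by
        rw [hval, div_lt_iff₀ hne]; linarith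
      have h3 : ‖(-L - t₀ * e) • dL + (-(t₀ * ε)) • v‖ ^ 2 < W ^ 2 := by
        rw [h2]; exact hval2
      nlinarith [norm_nonneg ((-L - t₀ * e) • dL + (-(t₀ * ε)) • v)]
    show max _ _ < W
    apply max_lt
    · have h9 := harm w₁ ⟨1, by norm_num, by rw [hw₁]; module⟩
      simpa [VShape.armWidth, VShape.dir] using h9
    · have h9 := harm w₂ ⟨-1, by norm_num, by rw [hw₂]; module⟩
      simpa [VShape.armWidth, VShape.dir] using h9
end
end

section
/- Let P ⊆ ℝ² be a finite nonempty set contained in a strip of width w > 0. Then for every ε > 0 there exists a V-shape covering P whose width is at most w/2 + ε. -/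
open Set Metric

noncomputable section

lemma iprod_coord (p q : Pt) : iprod p q = p 0 * q 0 + p 1 * q 1 := by
  simp [iprod, PiLp.inner_apply, RCLike.inner_apply, Fin.sum_univ_two]; ring

lemma mem_arm (V : VShape) (i : Fin 2) (p : Pt) (μ τ : ℝ) (hμ0 : 0 ≤ μ) (hμ1 : μ ≤ 1)
    (hτ : 0 ≤ τ) (hp : p = (1 - μ) • (V.x + τ • V.dir i) + μ • (V.y + τ • V.dir i)) :
    p ∈ V.arm i := by
  have h1 : V.x + τ • V.dir i ∈ ray V.x (V.dir i) := ⟨τ, hτ, rfl⟩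
  have h2 : V.y + τ • V.dir i ∈ ray V.y (V.dir i) := ⟨τ, hτ, rfl⟩
  have hseg := (convex_convexHull ℝ (ray V.x (V.dir i) ∪ ray V.y (V.dir i))).segment_subset
    (subset_convexHull ℝ _ (Or.inl h1)) (subset_convexHull ℝ _ (Or.inr h2))
  exact hseg ⟨1 - μ, μ, by linarith, hμ0, by ring, hp.symm⟩

set_option maxHeartbeats 1000000 in
/-- A finite nonempty set contained in a strip of width `w > 0` can be covered,
for every `ε > 0`, by a V-shape of width at most `w/2 + ε`. -/
theorem statement1 (P : Set Pt) (hPfin : P.Finite) (hPne : P.Nonempty)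
    (w : ℝ) (hw : 0 < w) (S : Set Pt) (hS : IsStrip S w) (hPS : P ⊆ S) :
    ∀ ε : ℝ, 0 < ε → ∃ V : VShape, V.covers P ∧ V.width ≤ w / 2 + ε := by
  intro ε hε
  obtain ⟨hw0, v, c, hv, hSdef⟩ := hS
  -- the unit vector orthogonal to `v`
  set u : Pt := (WithLp.equiv 2 (Fin 2 → ℝ)).symm ![-(v 1), v 0] with hu_def
  have hu0 : u 0 = -(v 1) := rfl
  have hu1 : u 1 = v 0 := rfl
  have hv2 : v 0 * v 0 + v 1 * v 1 = 1 := by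
    have h1 : (inner ℝ v v : ℝ) = 1 := by
      rw [real_inner_self_eq_norm_mul_norm, hv]; norm_num
    rw [show (inner ℝ v v : ℝ) = iprod v v from rfl, iprod_coord] at h1
    exact h1
  have hdecomp : ∀ p : Pt, p = (iprod p u) • u + (iprod p v) • v := by
    intro p
    ext i
    fin_cases i
    · show p 0 = iprod p u * u 0 + iprod p v * v 0
      rw [iprod_coord, iprod_coord, hu0, hu1]
      linear_combination (-(p 0)) * hv2
    · show p 1 = iprod p u * u 1 + iprod p v * v 1
      rw [iprod_coord, iprod_coord, hu0, hu1]
      linear_combination (-(p 1)) * hv2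
  -- a bound on the horizontal extent of P
  obtain ⟨p₀, hp₀⟩ := hPne
  obtain ⟨R0, hR0⟩ := (hPfin.image (fun p => |iprod p u|)).bddAbove
  set R : ℝ := R0 + 1 with hR_def
  have hR0nn : 0 ≤ R0 := le_trans (abs_nonneg _) (hR0 (mem_image_of_mem _ hp₀))
  have hRpos : 0 < R := by linarith
  have hR : ∀ p ∈ P, |iprod p u| ≤ R := fun p hp => by
    have : |iprod p u| ≤ R0 := hR0 (mem_image_of_mem _ hp); linarith
  -- the parameters
  set s : ℝ := ε / (2 * R) with hs_def
  have hs : 0 < s := by positivity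
  set L : ℝ := (w / 2 + ε) / s with hL_def
  have hL : 0 < L := by positivity
  set M : ℝ := R + w / (2 * s) with hM_def
  set hmid : ℝ := c + w / 2 with hmid_def
  set x : Pt := (-M) • u + hmid • v with hx_def
  set y : Pt := x + L • u with hy_def
  set u₁ : Pt := u + s • v with hu₁_def
  set u₂ : Pt := u - s • v with hu₂_def
  -- basic inner products
  have hvvi : iprod v v = 1 := by rw [iprod_coord]; exact hv2
  have huvi : iprod u v = 0 := by rw [iprod_coord, hu0, hu1]; ring
  have huui : iprod u u = 1 := by rw [iprod_coord, hu0, hu1]; linear_combination hv2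
  have hu₁v : iprod u₁ v = s := by
    have e0 : u₁ 0 = u 0 + s * v 0 := rfl
    have e1 : u₁ 1 = u 1 + s * v 1 := rfl
    rw [iprod_coord, e0, e1, hu0, hu1]; linear_combination s * hv2
  have hu₂v : iprod u₂ v = -s := by
    have e0 : u₂ 0 = u 0 - s * v 0 := rfl
    have e1 : u₂ 1 = u 1 - s * v 1 := rfl
    rw [iprod_coord, e0, e1, hu0, hu1]; linear_combination (-s) * hv2
  have hune : u ≠ 0 := by
    intro hh; rw [hh] at huui; simp [iprod] at huui
  have hu₁ne : u₁ ≠ 0 := by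
    intro hh; rw [hh] at hu₁v; simp [iprod] at hu₁v; exact absurd hu₁v.symm hs.ne'
  have hu₂ne : u₂ ≠ 0 := by
    intro hh; rw [hh] at hu₂v; simp [iprod] at hu₂v
    have : s = 0 := by linarith
    exact absurd this hs.ne'
  have hyx : y - x = L • u := by rw [hy_def]; abel
  have hxy : x ≠ y := by
    intro hh
    have h0 : L • u = 0 := by rw [← hyx, ← hh]; abel
    rcases smul_eq_zero.mp h0 with h | h
    · exact hL.ne' h
    · exact hune h
  have hperp : iprod (y - x) v = 0 := by
    rw [hyx, show iprod (L • u) v = L * iprod u v from real_inner_smul_left u v L, huvi]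
    ring
  have hside₁ : 0 ≤ iprod u₁ v := by rw [hu₁v]; exact hs.le
  have hside₂ : iprod u₂ v ≤ 0 := by rw [hu₂v]; linarith
  have hsM : s * M = s * R + w / 2 := by
    rw [hM_def]; field_simp [hs.ne']
  have hLM : L = M + R := by
    rw [hL_def, hM_def, hs_def]; field_simp; ring
  have hLs : L * s = w / 2 + ε := by
    rw [hL_def]; field_simp
  clear_value u R s L M hmid x y u₁ u₂
  refine ⟨⟨x, y, u₁, u₂, v, hxy, hu₁ne, hu₂ne, hv, hperp, hside₁, hside₂⟩, ?_, ?_⟩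
  · -- coverage
    intro p hp
    have hpb := hPS hp
    rw [hSdef] at hpb
    obtain ⟨hb1, hb2⟩ := hpb
    obtain ⟨haR1, haR2⟩ := abs_le.mp (hR p hp)
    set a : ℝ := iprod p u with ha_def
    set b : ℝ := iprod p v with hb_def
    have hdp : p = a • u + b • v := hdecomp p
    clear_value a b
    rcases le_total hmid b with hbh | hbh
    · -- upper half: arm 0, direction u₁
      left
      set τ : ℝ := (b - hmid) / s with hτ_def
      set μ : ℝ := (a - τ + M) / L with hμ_def
      have hτ0 : 0 ≤ τ := div_nonneg (by linarith) hs.le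
      have hτs : τ * s = b - hmid := div_mul_cancel₀ _ hs.ne'
      clear_value τ μ
      have hτle : τ ≤ a + M := by
        rw [hτ_def, div_le_iff₀ hs]
        have h1 : 0 ≤ s * (a + R) := mul_nonneg hs.le (by linarith)
        have h2 : (a + M) * s = s * (a + R) + w / 2 := by linear_combination hsM
        linarith
      have hμ0 : 0 ≤ μ := by
        rw [hμ_def]; exact div_nonneg (by linarith) hL.le
      have hμ1 : μ ≤ 1 := by
        rw [hμ_def, div_le_one hL]; linarith
      have hμL : μ * L = a - τ + M := by
        rw [hμ_def]; exact div_mul_cancel₀ _ hL.ne'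
      have hpeq : p = (1 - μ) • (x + τ • u₁) + μ • (y + τ • u₁) := by
        rw [hdp, hx_def, hy_def, hu₁_def, hx_def]
        match_scalars
        · linear_combination -hμL
        · linear_combination -hτs
      exact mem_arm _ 0 p μ τ hμ0 hμ1 hτ0 hpeq
    · -- lower half: arm 1, direction u₂
      right
      set τ : ℝ := (hmid - b) / s with hτ_def
      set μ : ℝ := (a - τ + M) / L with hμ_def
      have hτ0 : 0 ≤ τ := div_nonneg (by linarith) hs.le
      have hτs : τ * s = hmid - b := div_mul_cancel₀ _ hs.ne'
      clear_value τ μ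
      have hτle : τ ≤ a + M := by
        rw [hτ_def, div_le_iff₀ hs]
        have h1 : 0 ≤ s * (a + R) := mul_nonneg hs.le (by linarith)
        have h2 : (a + M) * s = s * (a + R) + w / 2 := by linear_combination hsM
        linarith
      have hμ0 : 0 ≤ μ := by
        rw [hμ_def]; exact div_nonneg (by linarith) hL.le
      have hμ1 : μ ≤ 1 := by
        rw [hμ_def, div_le_one hL]; linarith
      have hμL : μ * L = a - τ + M := by
        rw [hμ_def]; exact div_mul_cancel₀ _ hL.ne'
      have hpeq : p = (1 - μ) • (x + τ • u₂) + μ • (y + τ • u₂) := by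
        rw [hdp, hx_def, hy_def, hu₂_def, hx_def]
        match_scalars
        · linear_combination -hμL
        · linear_combination hτs
      exact mem_arm _ 1 p μ τ hμ0 hμ1 hτ0 hpeq
  · -- width
    have hw1 : Metric.infDist x (lineThrough y u₁) ≤ w / 2 + ε := by
      have hmem : y + (-L) • u₁ ∈ lineThrough y u₁ := ⟨-L, rfl⟩
      have hdist := Metric.infDist_le_dist_of_mem (x := x) hmem
      have heq : x - (y + (-L) • u₁) = (L * s) • v := by
        rw [hy_def, hu₁_def]; module
      calc Metric.infDist x (lineThrough y u₁) ≤ dist x (y + (-L) • u₁) := hdist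
        _ = ‖x - (y + (-L) • u₁)‖ := dist_eq_norm _ _
        _ = ‖(L * s) • v‖ := by rw [heq]
        _ = L * s := by
            rw [norm_smul, hv, mul_one, Real.norm_eq_abs, abs_of_pos (mul_pos hL hs)]
        _ = w / 2 + ε := hLs
    have hw2 : Metric.infDist x (lineThrough y u₂) ≤ w / 2 + ε := by
      have hmem : y + (-L) • u₂ ∈ lineThrough y u₂ := ⟨-L, rfl⟩
      have hdist := Metric.infDist_le_dist_of_mem (x := x) hmem
      have heq : x - (y + (-L) • u₂) = (-(L * s)) • v := by
        rw [hy_def, hu₂_def]; module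
      calc Metric.infDist x (lineThrough y u₂) ≤ dist x (y + (-L) • u₂) := hdist
        _ = ‖x - (y + (-L) • u₂)‖ := dist_eq_norm _ _
        _ = ‖(-(L * s)) • v‖ := by rw [heq]
        _ = L * s := by
            rw [norm_smul, hv, mul_one, Real.norm_eq_abs, abs_neg,
              abs_of_pos (mul_pos hL hs)]
        _ = w / 2 + ε := hLs
    simp only [VShape.width, VShape.armWidth, VShape.dir, Matrix.cons_val_zero,
      Matrix.cons_val_one, Matrix.head_cons]
    exact max_le hw1 hw2
end
end

section
/- Let Q ⊆ ℝ² be a nonempty bounded set of diameter D that is contained in a strip of width t whose boundary lines have direction given by a unit vector u. Let u' be a unit vector making angle α ∈ [0, π/2] with u. Then Q is contained in a strip whose boundary lines have direction u' and whose width is at most D·sin α + t·cos α. -/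
open Set Metric

noncomputable section

set_option maxHeartbeats 1000000 in
/-- A nonempty bounded set of diameter `D` contained in a strip of width `t`
with direction `u` is contained, for any unit vector `u'` making angle `α ∈ [0, π/2]` with
`u`, in a strip with direction `u'` of width at most `D·sin α + t·cos α`. -/
theorem statement8 (Q : Set Pt) (hQne : Q.Nonempty) (hQbdd : Bornology.IsBounded Q)
    (D : ℝ) (hD : Metric.diam Q = D) (t : ℝ) (ht : 0 ≤ t)
    (u : Pt) (hu : ‖u‖ = 1)
    (v : Pt) (c : ℝ) (hv : ‖v‖ = 1) (huv : iprod u v = 0)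
    (hQS : Q ⊆ {p | c ≤ iprod p v ∧ iprod p v ≤ c + t})
    (u' : Pt) (hu' : ‖u'‖ = 1)
    (α : ℝ) (hα : α ∈ Set.Icc 0 (Real.pi / 2))
    (hangle : InnerProductGeometry.angle u u' = α) :
    ∃ (v' : Pt) (c' : ℝ), ‖v'‖ = 1 ∧ iprod u' v' = 0 ∧
      Q ⊆ {p | c' ≤ iprod p v' ∧ iprod p v' ≤ c' + (D * Real.sin α + t * Real.cos α)} := by
  classical
  -- Coefficients of u' in the orthonormal basis (u, v)
  set a : ℝ := inner ℝ u' u with ha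
  set b : ℝ := inner ℝ u' v with hb
  -- (u, v) is an orthonormal basis of the plane
  have ON : Orthonormal ℝ ![u, v] := by
    rw [orthonormal_iff_ite]
    intro i j
    have h1 : (inner ℝ u u : ℝ) = 1 := by
      rw [real_inner_self_eq_norm_mul_norm, hu]; ring
    have h2 : (inner ℝ v v : ℝ) = 1 := by
      rw [real_inner_self_eq_norm_mul_norm, hv]; ring
    have h3 : (inner ℝ u v : ℝ) = 0 := huv
    have h4 : (inner ℝ v u : ℝ) = 0 := by rw [real_inner_comm]; exact huv
    fin_cases i <;> fin_cases j <;> simp [h1, h2, h3, h4, hu, hv]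
  have hcard : Fintype.card (Fin 2) = Module.finrank ℝ Pt := by
    simp [finrank_euclideanSpace_fin]
  set B : Module.Basis (Fin 2) ℝ Pt := basisOfOrthonormalOfCardEqFinrank ON hcard with hB
  have hBcoe : ⇑B = ![u, v] := coe_basisOfOrthonormalOfCardEqFinrank ON hcard
  have ONB : Orthonormal ℝ ⇑B := by rw [hBcoe]; exact ON
  set OB : OrthonormalBasis (Fin 2) ℝ Pt := B.toOrthonormalBasis ONB with hOB
  have hOBcoe : ⇑OB = ![u, v] := by rw [hOB, B.coe_toOrthonormalBasis ONB, hBcoe]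
  -- Parseval: a² + b² = 1
  have hab : a * a + b * b = 1 := by
    have := OB.sum_inner_mul_inner u' u'
    rw [real_inner_self_eq_norm_mul_norm, hu'] at this
    rw [Fin.sum_univ_two, hOBcoe] at this
    simp only [Matrix.cons_val_zero, Matrix.cons_val_one, Matrix.head_cons] at this
    have e1 : (inner ℝ u u' : ℝ) = a := by rw [ha]; exact (real_inner_comm u u').symm
    have e2 : (inner ℝ v u' : ℝ) = b := by rw [hb]; exact (real_inner_comm v u').symm
    rw [e1, e2] at this
    linarith [this]
  -- cos α = a, sin α = |b|
  have hcos : Real.cos α = a := by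
    rw [← hangle, InnerProductGeometry.cos_angle, hu, hu']
    rw [real_inner_comm]
    simp [ha]
  have hsin : Real.sin α = |b| := by
    rw [Real.sin_eq_sqrt_one_sub_cos_sq hα.1 (le_trans hα.2 (by linarith [Real.pi_pos]))]
    rw [hcos]
    have : 1 - a ^ 2 = b ^ 2 := by nlinarith
    rw [this, Real.sqrt_sq_eq_abs]
  have ha0 : 0 ≤ a := by
    rw [← hcos]
    exact Real.cos_nonneg_of_mem_Icc ⟨by linarith [hα.1, Real.pi_pos], hα.2⟩
  -- D ≥ 0
  have hD0 : 0 ≤ D := hD ▸ Metric.diam_nonneg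
  -- the new normal vector
  set v' : Pt := a • v - b • u with hv'def
  have hv'norm : ‖v'‖ = 1 := by
    have : (inner ℝ v' v' : ℝ) = 1 := by
      rw [hv'def]
      rw [inner_sub_left, inner_sub_right, inner_sub_right]
      rw [real_inner_smul_left, real_inner_smul_left, real_inner_smul_left,
        real_inner_smul_left, real_inner_smul_right, real_inner_smul_right,
        real_inner_smul_right, real_inner_smul_right]
      have h1 : (inner ℝ u u : ℝ) = 1 := by
        rw [real_inner_self_eq_norm_mul_norm, hu]; ring
      have h2 : (inner ℝ v v : ℝ) = 1 := by
        rw [real_inner_self_eq_norm_mul_norm, hv]; ring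
      have h3 : (inner ℝ u v : ℝ) = 0 := huv
      have h4 : (inner ℝ v u : ℝ) = 0 := by rw [real_inner_comm]; exact huv
      rw [h1, h2, h3, h4]
      nlinarith
    rw [real_inner_self_eq_norm_mul_norm] at this
    nlinarith [norm_nonneg v']
  have hperp : iprod u' v' = 0 := by
    show (inner ℝ u' v' : ℝ) = 0
    rw [hv'def, inner_sub_right, real_inner_smul_right, real_inner_smul_right]
    rw [← hb, ← ha]; ring
  -- key estimate for the difference of inner ℝ products over Q
  set W : ℝ := D * Real.sin α + t * Real.cos α with hW
  have key : ∀ p ∈ Q, ∀ q ∈ Q, (inner ℝ p v' : ℝ) - inner ℝ q v' ≤ W := by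
    intro p hp q hq
    have hdiff : (inner ℝ p v' : ℝ) - inner ℝ q v' = inner ℝ (p - q) v' := by
      rw [inner_sub_left]
    have hexp : (inner ℝ (p - q) v' : ℝ) = a * inner ℝ (p - q) v - b * inner ℝ (p - q) u := by
      rw [hv'def, inner_sub_right, real_inner_smul_right, real_inner_smul_right]
    have h1 : (inner ℝ (p - q) v : ℝ) ≤ t := by
      rw [inner_sub_left]
      have e1 : (inner ℝ p v : ℝ) ≤ c + t := (hQS hp).2
      have e2 : c ≤ (inner ℝ q v : ℝ) := (hQS hq).1
      linarith
    have h2 : |(inner ℝ (p - q) u : ℝ)| ≤ D := by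
      calc |(inner ℝ (p - q) u : ℝ)| ≤ ‖p - q‖ * ‖u‖ := abs_real_inner_le_norm _ _
        _ = dist p q := by rw [hu, mul_one, dist_eq_norm]
        _ ≤ D := hD ▸ Metric.dist_le_diam_of_mem hQbdd hp hq
    have h3 : -b * inner ℝ (p - q) u ≤ |b| * D := by
      calc -b * (inner ℝ (p - q) u : ℝ) ≤ |(-b) * inner ℝ (p - q) u| := le_abs_self _
        _ = |b| * |(inner ℝ (p - q) u : ℝ)| := by rw [abs_mul, abs_neg]
        _ ≤ |b| * D := by
            exact mul_le_mul_of_nonneg_left h2 (abs_nonneg b)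
    have h4 : a * (inner ℝ (p - q) v : ℝ) ≤ a * t := mul_le_mul_of_nonneg_left h1 ha0
    rw [hdiff, hexp, hW, hsin, hcos]
    nlinarith
  -- bounded below
  obtain ⟨R, hR⟩ := hQbdd.exists_norm_le
  have hbdd : BddBelow ((fun p => (inner ℝ p v' : ℝ)) '' Q) := by
    refine ⟨-R, ?_⟩
    rintro y ⟨p, hp, rfl⟩
    have h := abs_real_inner_le_norm p v'
    rw [hv'norm, mul_one] at h
    have h2 := hR p hp
    have h3 := neg_abs_le (inner ℝ p v' : ℝ)
    linarith
  set c' : ℝ := sInf ((fun p => (inner ℝ p v' : ℝ)) '' Q) with hc'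
  refine ⟨v', c', hv'norm, hperp, ?_⟩
  intro p hp
  constructor
  · exact csInf_le hbdd ⟨p, hp, rfl⟩
  · show (inner ℝ p v' : ℝ) ≤ c' + W
    have : (inner ℝ p v' : ℝ) - W ≤ c' := by
      apply le_csInf (hQne.image _)
      rintro y ⟨q, hq, rfl⟩
      have := key p hp q hq
      linarith
    linarith
end
end

section
/- Let P ⊆ ℝ² be a finite set with no three points collinear, and let a, b, c, d ∈ P be four distinct points in convex position occurring in counterclockwise order a, b, c, d. Suppose the line ℓ_ab through a and b and the line ℓ_cd through c and d are not parallel, meeting at a point v, and that a and b lie on a common closed ray R₁ emanating from v along ℓ_ab while c and d lie on a common closed ray R₂ emanating from v along ℓ_cd. Let W = conv(R₁ ∪ R₂) be the wedge determined by a, b, c, d, and let Q be the set of points of P lying strictly to the left of the directed line from a to b. Then the interior of W contains no point of P if and only if ℓ_cd supports conv(Q) (i.e., Q lies in one closed half-plane bounded by ℓ_cd) and ℓ_cd separates the segment ab from Q (i.e., the segment ab and Q lie in opposite closed half-planes bounded by ℓ_cd). -/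
open Set Metric

noncomputable section

/-- The signed cross product (orientation test): positive iff `q` is strictly to the left of
the directed line from `o` to `p`. -/
def cross (o p q : Pt) : ℝ := (p 0 - o 0) * (q 1 - o 1) - (p 1 - o 1) * (q 0 - o 0)

namespace S9aux

lemma pt_ext {x y : Pt} (h0 : x 0 = y 0) (h1 : x 1 = y 1) : x = y := by
  ext i; fin_cases i <;> assumption

lemma cross_cyc (o p q : Pt) : cross o p q = cross p q o := by unfold cross; ring

def lf (e f : ℝ) : Pt →L[ℝ] ℝ := e • EuclideanSpace.proj 0 + f • EuclideanSpace.proj (1 : Fin 2)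

lemma lf_apply (e f : ℝ) (p : Pt) : lf e f p = e * p 0 + f * p 1 := by
  simp [lf]

lemma lf_surj {e f : ℝ} (h : ¬(e = 0 ∧ f = 0)) : Function.Surjective (lf e f) := by
  intro r
  have hef : 0 < e ^ 2 + f ^ 2 := by
    rcases not_and_or.mp h with h' | h' <;> positivity
  refine ⟨(r / (e ^ 2 + f ^ 2)) • ((e • EuclideanSpace.single 0 1 + f • EuclideanSpace.single 1 1 : Pt)), ?_⟩
  rw [map_smul, lf_apply]
  have h0 : ((e • EuclideanSpace.single 0 1 + f • EuclideanSpace.single 1 1 : Pt)) 0 = e := by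
    simp [EuclideanSpace.single_apply]
  have h1 : ((e • EuclideanSpace.single 0 1 + f • EuclideanSpace.single 1 1 : Pt)) 1 = f := by
    simp [EuclideanSpace.single_apply]
  rw [h0, h1, smul_eq_mul]
  field_simp

lemma interior_halfplane {e f : ℝ} (C : ℝ) (h : ¬(e = 0 ∧ f = 0)) :
    interior {p : Pt | C ≤ lf e f p} = {p : Pt | C < lf e f p} := by
  have : {p : Pt | C ≤ lf e f p} = (lf e f) ⁻¹' (Ici C) := rfl
  rw [this, ← ((lf e f).isOpenMap (lf_surj h)).preimage_interior_eq_interior_preimage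
      (lf e f).continuous (Ici C), interior_Ici]
  rfl

lemma convex_halfplane (e f C : ℝ) : Convex ℝ {p : Pt | C ≤ lf e f p} :=
  convex_halfSpace_ge ⟨fun x y => map_add _ x y, fun c x => map_smul _ c x⟩ C

lemma cross_set_eq (o q : Pt) :
    {p : Pt | 0 ≤ cross o q p} =
      {p : Pt | ((q 0 - o 0) * o 1 - (q 1 - o 1) * o 0) ≤ lf (o 1 - q 1) (q 0 - o 0) p} := by
  ext p
  simp only [mem_setOf_eq, lf_apply, cross]
  constructor <;> intro hp <;> nlinarith [hp]

lemma ne_coords {o q : Pt} (h : o ≠ q) : ¬(o 1 - q 1 = 0 ∧ q 0 - o 0 = 0) := by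
  rintro ⟨h1, h0⟩
  exact h (pt_ext (by linarith) (by linarith))

lemma convex_crossSet (o q : Pt) : Convex ℝ {p : Pt | 0 ≤ cross o q p} := by
  rw [cross_set_eq]; exact convex_halfplane _ _ _

lemma interior_crossSet {o q : Pt} (h : o ≠ q) :
    interior {p : Pt | 0 ≤ cross o q p} = {p : Pt | 0 < cross o q p} := by
  rw [cross_set_eq, interior_halfplane _ (ne_coords h)]
  ext p
  simp only [mem_setOf_eq, lf_apply, cross]
  constructor <;> intro hp <;> nlinarith [hp]

end S9aux

set_option maxHeartbeats 2000000 in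
/-- Characterization of empty wedges: the interior of the wedge
`W = conv(R₁ ∪ R₂)` determined by `a, b, c, d` contains no point of `P` if and only if
the line through `c, d` supports `conv(Q)` and separates the segment `ab` from `Q`,
where `Q` is the set of points of `P` strictly to the left of the directed line `ab`. -/
theorem statement9 (P : Set Pt) (hPfin : P.Finite)
    (hgen : ∀ x ∈ P, ∀ y ∈ P, ∀ z ∈ P, x ≠ y → x ≠ z → y ≠ z →
      ¬ Collinear ℝ ({x, y, z} : Set Pt))
    (a b c d : Pt) (ha : a ∈ P) (hb : b ∈ P) (hc : c ∈ P) (hd : d ∈ P)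
    (hab : a ≠ b) (hac : a ≠ c) (had : a ≠ d) (hbc : b ≠ c) (hbd : b ≠ d) (hcd : c ≠ d)
    (hccw : 0 < cross a b c ∧ 0 < cross b c d ∧ 0 < cross c d a ∧ 0 < cross d a b)
    (v : Pt) (hv₁ : v ∈ lineThrough a (b - a)) (hv₂ : v ∈ lineThrough c (d - c))
    (hnpar : ¬ ∃ r : ℝ, d - c = r • (b - a))
    (u₁ u₂ : Pt) (hu₁ : u₁ ≠ 0) (hu₂ : u₂ ≠ 0)
    (hR₁ : a ∈ ray v u₁ ∧ b ∈ ray v u₁) (hR₂ : c ∈ ray v u₂ ∧ d ∈ ray v u₂)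
    (W : Set Pt) (hW : W = convexHull ℝ (ray v u₁ ∪ ray v u₂))
    (Q : Set Pt) (hQ : Q = {p ∈ P | 0 < cross a b p}) :
    P ∩ interior W = ∅ ↔
      ((lineThrough c (d - c) ∩ convexHull ℝ Q).Nonempty ∧
        ((∀ z ∈ Q, 0 ≤ cross c d z) ∨ (∀ z ∈ Q, cross c d z ≤ 0)) ∧
        (((∀ z ∈ Q, 0 ≤ cross c d z) ∧ ∀ z ∈ segment ℝ a b, cross c d z ≤ 0) ∨
         ((∀ z ∈ Q, cross c d z ≤ 0) ∧ ∀ z ∈ segment ℝ a b, 0 ≤ cross c d z))) := by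
  classical
  obtain ⟨⟨ta, hta0, haeq⟩, ⟨tb, htb0, hbeq⟩⟩ := hR₁
  obtain ⟨⟨sc, hsc0, hceq⟩, ⟨sd, hsd0, hdeq⟩⟩ := hR₂
  obtain ⟨h1, h2, h3, h4⟩ := hccw
  have ha0 : a 0 = v 0 + ta * u₁ 0 := by rw [haeq]; rfl
  have ha1 : a 1 = v 1 + ta * u₁ 1 := by rw [haeq]; rfl
  have hb0 : b 0 = v 0 + tb * u₁ 0 := by rw [hbeq]; rfl
  have hb1 : b 1 = v 1 + tb * u₁ 1 := by rw [hbeq]; rfl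
  have hc0 : c 0 = v 0 + sc * u₂ 0 := by rw [hceq]; rfl
  have hc1 : c 1 = v 1 + sc * u₂ 1 := by rw [hceq]; rfl
  have hd0 : d 0 = v 0 + sd * u₂ 0 := by rw [hdeq]; rfl
  have hd1 : d 1 = v 1 + sd * u₂ 1 := by rw [hdeq]; rfl
  set D := u₁ 0 * u₂ 1 - u₁ 1 * u₂ 0 with hDdef
  -- general formulas
  have hfab : ∀ p : Pt, cross a b p
      = (tb - ta) * (u₁ 0 * (p 1 - v 1) - u₁ 1 * (p 0 - v 0)) := by
    intro p; unfold cross; rw [ha0, ha1, hb0, hb1]; ring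
  have hfcd : ∀ p : Pt, cross c d p
      = (sd - sc) * (u₂ 0 * (p 1 - v 1) - u₂ 1 * (p 0 - v 0)) := by
    intro p; unfold cross; rw [hc0, hc1, hd0, hd1]; ring
  have hcabc : cross a b c = (tb - ta) * sc * D := by
    rw [hfab c, hc0, hc1]; ring
  have hcda : cross c d a = -((sd - sc) * ta * D) := by
    rw [hfcd a, ha0, ha1]; ring
  have h2' : 0 < cross c d b := by
    rw [show cross c d b = cross b c d from (S9aux.cross_cyc b c d).symm]; exact h2
  have hcdb : cross c d b = -((sd - sc) * tb * D) := by
    rw [hfcd b, hb0, hb1]; ring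
  -- positivity of parameters
  have hsc : 0 < sc := by
    rcases hsc0.lt_or_eq with h | h
    · exact h
    · exfalso; rw [hcabc, ← h] at h1; simp at h1
  have hta : 0 < ta := by
    rcases hta0.lt_or_eq with h | h
    · exact h
    · exfalso; rw [hcda, ← h] at h3; simp at h3
  have hαD : 0 < (tb - ta) * D := by
    by_contra h
    push_neg at h
    rw [hcabc] at h1
    nlinarith
  have hβD : (sd - sc) * D < 0 := by
    by_contra h
    push_neg at h
    rw [hcda] at h3
    nlinarith
  have hα : (tb - ta) ≠ 0 := by
    intro h; rw [h, zero_mul] at hαD; exact lt_irrefl _ hαD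
  have hβ : (sd - sc) ≠ 0 := by
    intro h; rw [h, zero_mul] at hβD; exact lt_irrefl _ hβD
  have hDne : D ≠ 0 := by
    intro h; rw [h, mul_zero] at hαD; exact lt_irrefl _ hαD
  -- the wedge as intersection of half-planes
  have hW' : W = {p : Pt | 0 ≤ cross a b p} ∩ {p : Pt | 0 ≤ cross c d p} := by
    rw [hW]
    apply Subset.antisymm
    · apply convexHull_min
      · rintro q (⟨r, hr, rfl⟩ | ⟨r, hr, rfl⟩)
        · have e0 : (v + r • u₁) 0 = v 0 + r * u₁ 0 := rfl
          have e1 : (v + r • u₁) 1 = v 1 + r * u₁ 1 := rfl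
          constructor
          · show 0 ≤ cross a b _
            rw [hfab, e0, e1]
            have : (tb - ta) * (u₁ 0 * (v 1 + r * u₁ 1 - v 1) - u₁ 1 * (v 0 + r * u₁ 0 - v 0))
                = 0 := by ring
            rw [this]
          · show 0 ≤ cross c d _
            rw [hfcd, e0, e1]
            have : (sd - sc) * (u₂ 0 * (v 1 + r * u₁ 1 - v 1) - u₂ 1 * (v 0 + r * u₁ 0 - v 0))
                = r * (-((sd - sc) * D)) := by ring
            rw [this]
            exact mul_nonneg hr (by linarith)
        · have e0 : (v + r • u₂) 0 = v 0 + r * u₂ 0 := rfl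
          have e1 : (v + r • u₂) 1 = v 1 + r * u₂ 1 := rfl
          constructor
          · show 0 ≤ cross a b _
            rw [hfab, e0, e1]
            have : (tb - ta) * (u₁ 0 * (v 1 + r * u₂ 1 - v 1) - u₁ 1 * (v 0 + r * u₂ 0 - v 0))
                = r * ((tb - ta) * D) := by ring
            rw [this]
            exact mul_nonneg hr (by linarith)
          · show 0 ≤ cross c d _
            rw [hfcd, e0, e1]
            have : (sd - sc) * (u₂ 0 * (v 1 + r * u₂ 1 - v 1) - u₂ 1 * (v 0 + r * u₂ 0 - v 0))
                = 0 := by ring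
            rw [this]
      · exact (S9aux.convex_crossSet a b).inter (S9aux.convex_crossSet c d)
    · rintro p ⟨hp1, hp2⟩
      simp only [mem_setOf_eq] at hp1 hp2
      set g1 := u₁ 0 * (p 1 - v 1) - u₁ 1 * (p 0 - v 0) with hg1
      set g2 := u₂ 0 * (p 1 - v 1) - u₂ 1 * (p 0 - v 0) with hg2
      have hp1' : 0 ≤ (tb - ta) * g1 := by rw [← hfab p]; exact hp1
      have hp2' : 0 ≤ (sd - sc) * g2 := by rw [← hfcd p]; exact hp2
      have hg1D : 0 ≤ g1 * D := by
        have hkey : g1 * D = ((tb - ta) * g1) * ((tb - ta) * D) / (tb - ta) ^ 2 := by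
          field_simp
        rw [hkey]
        exact div_nonneg (mul_nonneg hp1' hαD.le) (sq_nonneg _)
      have hg2D : g2 * D ≤ 0 := by
        have hkey : -(g2 * D) = ((sd - sc) * g2) * (-((sd - sc) * D)) / (sd - sc) ^ 2 := by
          field_simp
        have h9 : 0 ≤ -(g2 * D) := by
          rw [hkey]
          exact div_nonneg (mul_nonneg hp2' (by linarith)) (sq_nonneg _)
        linarith
      set s := -g2 / D with hs_def
      set t := g1 / D with ht_def
      have hs : 0 ≤ s := by
        have : s = (-(g2 * D)) / D ^ 2 := by
          rw [hs_def]; field_simp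
        rw [this]
        exact div_nonneg (by linarith) (sq_nonneg D)
      have ht : 0 ≤ t := by
        have : t = (g1 * D) / D ^ 2 := by
          rw [ht_def]; field_simp
        rw [this]
        exact div_nonneg hg1D (sq_nonneg D)
      have hx : v + (2 * s) • u₁ ∈ ray v u₁ ∪ ray v u₂ :=
        Or.inl ⟨2 * s, by linarith, rfl⟩
      have hy : v + (2 * t) • u₂ ∈ ray v u₁ ∪ ray v u₂ :=
        Or.inr ⟨2 * t, by linarith, rfl⟩
      have hmem := (convex_convexHull ℝ (ray v u₁ ∪ ray v u₂))
        (subset_convexHull ℝ _ hx) (subset_convexHull ℝ _ hy)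
        (by norm_num : (0:ℝ) ≤ 1/2) (by norm_num : (0:ℝ) ≤ 1/2) (by norm_num)
      have hpeq : p = (1/2 : ℝ) • (v + (2 * s) • u₁) + (1/2 : ℝ) • (v + (2 * t) • u₂) := by
        have hcr0 : (p 0 - v 0) * D = -g2 * u₁ 0 + g1 * u₂ 0 := by
          rw [hg1, hg2]; ring
        have hcr1 : (p 1 - v 1) * D = -g2 * u₁ 1 + g1 * u₂ 1 := by
          rw [hg1, hg2]; ring
        apply S9aux.pt_ext
        · show p 0 = 1/2 * (v 0 + 2 * s * u₁ 0) + 1/2 * (v 0 + 2 * t * u₂ 0)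
          rw [hs_def, ht_def]
          field_simp
          linear_combination hcr0
        · show p 1 = 1/2 * (v 1 + 2 * s * u₁ 1) + 1/2 * (v 1 + 2 * t * u₂ 1)
          rw [hs_def, ht_def]
          field_simp
          linear_combination hcr1
      rw [hpeq]; exact hmem
  have hint : interior W = {p : Pt | 0 < cross a b p} ∩ {p : Pt | 0 < cross c d p} := by
    rw [hW', interior_inter, S9aux.interior_crossSet hab, S9aux.interior_crossSet hcd]
  have hmain : (P ∩ interior W = ∅) ↔ ∀ z ∈ Q, cross c d z ≤ 0 := by
    rw [hint, hQ]
    constructor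
    · intro h z hz
      obtain ⟨hzP, hzab⟩ := hz
      by_contra hpos
      push_neg at hpos
      have : z ∈ P ∩ ({p : Pt | 0 < cross a b p} ∩ {p : Pt | 0 < cross c d p}) :=
        ⟨hzP, hzab, hpos⟩
      rw [h] at this
      exact this
    · intro h
      apply eq_empty_iff_forall_notMem.2
      rintro p ⟨hpP, hp1, hp2⟩
      exact absurd hp2 (not_lt.2 (h p ⟨hpP, hp1⟩))
  have hcQ : c ∈ Q := by rw [hQ]; exact ⟨hc, h1⟩
  have hseg : ∀ z ∈ segment ℝ a b, 0 ≤ cross c d z := by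
    rintro z ⟨l1, l2, hl1, hl2, hsum, rfl⟩
    have e0 : (l1 • a + l2 • b) 0 = l1 * a 0 + l2 * b 0 := rfl
    have e1 : (l1 • a + l2 • b) 1 = l1 * a 1 + l2 * b 1 := rfl
    have key : cross c d (l1 • a + l2 • b) = l1 * cross c d a + l2 * cross c d b := by
      unfold cross
      rw [e0, e1]
      linear_combination ((d 0 - c 0) * c 1 - (d 1 - c 1) * c 0) * hsum
    rw [key]
    have := mul_nonneg hl1 h3.le
    have := mul_nonneg hl2 h2'.le
    linarith
  rw [hmain]
  constructor
  · intro h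
    refine ⟨⟨c, ⟨0, by simp⟩, subset_convexHull ℝ Q hcQ⟩, Or.inr h, Or.inr ⟨h, hseg⟩⟩
  · rintro ⟨-, -, h3'⟩
    rcases h3' with ⟨-, hseg'⟩ | ⟨h', -⟩
    · exact absurd (hseg' a (left_mem_segment ℝ a b)) (not_le.2 h3)
    · exact h'
end
end

section
/- Let a, b, c ∈ ℝ² be non-collinear points such that the interior angle of triangle abc at vertex a is obtuse, i.e., ∠cab > π/2. Then there exists a strip containing {a, b, c} whose width is strictly less than dist(c, line(a,b)). (In other words, the strip having a and b on one boundary line and c on the other boundary line is not a minimum-width strip containing the three points.) -/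
open Set Metric

noncomputable section

private lemma norm_sq_le_add_perp {u v : Pt} (hp : (inner ℝ u v : ℝ) = 0) (k : ℝ) :
    ‖u‖ ^ 2 ≤ ‖u + k • v‖ ^ 2 := by
  have hc : (inner ℝ v u : ℝ) = 0 := by rw [real_inner_comm]; exact hp
  rw [← real_inner_self_eq_norm_sq, ← real_inner_self_eq_norm_sq,
    inner_add_left, inner_add_right, inner_add_right, real_inner_smul_left,
    real_inner_smul_right, real_inner_smul_left, real_inner_smul_right,
    hp, hc]
  have h2 := real_inner_self_nonneg (x := v)
  nlinarith [sq_nonneg k]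

private lemma inner_self_pos' {z : Pt} (hz : z ≠ 0) : 0 < (inner ℝ z z : ℝ) := by
  rw [real_inner_self_eq_norm_sq]
  exact pow_pos (norm_pos_iff.mpr hz) 2

/-- If the angle of a triangle `abc` at `a` is obtuse, then some strip
containing the three points is strictly narrower than the height from `c`, i.e. than
`dist(c, line(a,b))`. -/
theorem statement12 (a b c : Pt) (h : ¬ Collinear ℝ ({a, b, c} : Set Pt))
    (hobtuse : Real.pi / 2 < EuclideanGeometry.angle c a b) :
    ∃ (S : Set Pt) (w : ℝ), IsStrip S w ∧ ({a, b, c} : Set Pt) ⊆ S ∧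
      w < Metric.infDist c (lineThrough a (b - a)) := by
  classical
  set x : Pt := a - b with hx
  set y : Pt := c - a with hy
  have hab : a ≠ b := by
    rintro rfl
    exact h ((collinear_pair ℝ a c).subset (by intro p hp; rcases hp with rfl | rfl | rfl <;> simp))
  have hac : a ≠ c := by
    rintro rfl
    exact h ((collinear_pair ℝ a b).subset (by intro p hp; rcases hp with rfl | rfl | rfl <;> simp))
  have hxne : x ≠ 0 := sub_ne_zero.mpr hab
  have hyne : y ≠ 0 := sub_ne_zero.mpr (fun hh => hac hh.symm)
  set α : ℝ := @inner ℝ _ _ x x with hα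
  set β : ℝ := @inner ℝ _ _ y y with hβ
  set γ : ℝ := @inner ℝ _ _ x y with hγ
  have hα0 : 0 < α := inner_self_pos' hxne
  have hβ0 : 0 < β := inner_self_pos' hyne
  have hγyx : (inner ℝ y x : ℝ) = γ := by rw [real_inner_comm]
  -- obtuse angle gives γ > 0
  have hγpos : 0 < γ := by
    have hcos : Real.cos (EuclideanGeometry.angle c a b) < 0 := by
      refine Real.cos_neg_of_pi_div_two_lt_of_lt hobtuse ?_
      have := EuclideanGeometry.angle_le_pi c a b
      linarith [Real.pi_pos]
    rw [EuclideanGeometry.angle, InnerProductGeometry.cos_angle] at hcos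
    have hden : (0:ℝ) ≤ ‖c -ᵥ a‖ * ‖b -ᵥ a‖ := by positivity
    have hnum : (inner ℝ (c -ᵥ a) (b -ᵥ a) : ℝ) < 0 := by
      rcases div_neg_iff.mp hcos with ⟨_, h2⟩ | ⟨h1, _⟩
      · linarith
      · exact h1
    have heq : (inner ℝ (c -ᵥ a) (b -ᵥ a) : ℝ) = -γ := by
      have h1 : (c : Pt) -ᵥ a = y := rfl
      have h2 : (b : Pt) -ᵥ a = -x := by
        show (b : Pt) - a = -x
        rw [hx]; abel
      rw [h1, h2, inner_neg_right, hγyx]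
    rw [heq] at hnum
    linarith
  have hu_eq : c - b = y + x := by rw [hx, hy]; abel
  have hinner_xu : (inner ℝ x (y + x) : ℝ) = γ + α := by
    rw [inner_add_right, ← hγ, ← hα]
  have hinner_uu : (inner ℝ (y + x) (y + x) : ℝ) = β + 2 * γ + α := by
    rw [inner_add_left, inner_add_right, inner_add_right, hγyx, ← hα, ← hβ, ← hγ]
    ring
  have huu_pos : (0:ℝ) < β + 2 * γ + α := by linarith
  set t : ℝ := (γ + α) / (β + 2 * γ + α) with ht
  set d : Pt := x - t • (y + x) with hd
  have hdu : (inner ℝ d (y + x) : ℝ) = 0 := by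
    rw [hd, inner_sub_left, real_inner_smul_left, hinner_xu, hinner_uu, ht]
    field_simp
    ring
  have hdd : (inner ℝ d d : ℝ) = α - (γ + α) ^ 2 / (β + 2 * γ + α) := by
    have h1 : (inner ℝ d d : ℝ) = inner ℝ d x - t * inner ℝ d (y + x) := by
      rw [hd, inner_sub_right, real_inner_smul_right]
    have h2 : (inner ℝ d x : ℝ) = α - t * (γ + α) := by
      have hcx : (inner ℝ (y + x) x : ℝ) = γ + α := by rw [real_inner_comm]; exact hinner_xu
      rw [hd, inner_sub_left, real_inner_smul_left, ← hα, hcx]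
    rw [h1, h2, hdu, ht]
    field_simp
    ring
  have hdne : d ≠ 0 := by
    intro h0
    apply h
    rw [collinear_iff_of_mem (show b ∈ ({a,b,c} : Set Pt) by simp)]
    refine ⟨y + x, ?_⟩
    intro p hp
    have hxa : x = t • (y + x) := by rwa [hd, sub_eq_zero] at h0
    rcases hp with rfl | rfl | rfl
    · refine ⟨t, ?_⟩
      have : p = x + b := by rw [hx]; abel
      rw [this, ← hxa, vadd_eq_add]
    · exact ⟨0, by simp⟩
    · refine ⟨1, ?_⟩
      have : p = (y + x) + b := by rw [← hu_eq]; abel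
      rw [this, one_smul, vadd_eq_add]
  have hG : 0 < α * β - γ ^ 2 := by
    have hpos : (0:ℝ) < inner ℝ d d := inner_self_pos' hdne
    rw [hdd] at hpos
    have h3 : (γ + α) ^ 2 < α * (β + 2*γ + α) := by
      rw [← div_lt_iff₀ huu_pos]
      nlinarith [div_nonneg (sq_nonneg (γ + α)) huu_pos.le]
    nlinarith
  set w : ℝ := ‖d‖ with hw
  have hw0 : 0 < w := norm_pos_iff.mpr hdne
  set v : Pt := w⁻¹ • d with hv
  have hvnorm : ‖v‖ = 1 := by
    rw [hv, norm_smul, norm_inv, norm_norm, ← hw, inv_mul_cancel₀ hw0.ne']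
  set c₀ : ℝ := iprod b v with hc₀
  refine ⟨{p | c₀ ≤ iprod p v ∧ iprod p v ≤ c₀ + w}, w, ⟨hw0.le, v, c₀, hvnorm, rfl⟩, ?_, ?_⟩
  · -- membership of a, b, c
    have huv : (inner ℝ (c - b) v : ℝ) = 0 := by
      rw [hu_eq, hv, real_inner_smul_right, real_inner_comm, hdu, mul_zero]
    have hav : iprod a v = c₀ + w := by
      have ha_eq : a = b + t • (c - b) + d := by
        rw [hd, hu_eq, hx]; abel
      have hdv : (inner ℝ d v : ℝ) = w := by
        rw [hv, real_inner_smul_right, real_inner_self_eq_norm_sq, ← hw]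
        rw [pow_two, ← mul_assoc, inv_mul_cancel₀ hw0.ne', one_mul]
      show (inner ℝ a v : ℝ) = c₀ + w
      rw [ha_eq, inner_add_left, inner_add_left, real_inner_smul_left, huv, hdv, hc₀]
      show (inner ℝ b v : ℝ) + t * 0 + w = (inner ℝ b v : ℝ) + w
      ring
    have hcv : iprod c v = c₀ := by
      show (inner ℝ c v : ℝ) = c₀
      have hc_eq : c = b + (c - b) := by abel
      rw [hc_eq, inner_add_left, huv, hc₀]
      show (inner ℝ b v : ℝ) + 0 = (inner ℝ b v : ℝ)
      ring
    intro p hp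
    rcases hp with rfl | rfl | rfl
    · exact ⟨by rw [hav]; linarith, le_of_eq hav⟩
    · exact ⟨le_refl _, by linarith⟩
    · exact ⟨le_of_eq hcv.symm, by rw [hcv]; linarith⟩
  · -- width comparison
    set s : ℝ := -γ / α with hs
    set e : Pt := b - a with he
    have he_eq : e = -x := by rw [he, hx]; abel
    set hvec : Pt := y - s • e with hhv
    have hee : (inner ℝ e e : ℝ) = α := by rw [he_eq, inner_neg_neg, ← hα]
    have hye : (inner ℝ y e : ℝ) = -γ := by rw [he_eq, inner_neg_right, hγyx]
    have hhe : (inner ℝ hvec e : ℝ) = 0 := by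
      rw [hhv, inner_sub_left, real_inner_smul_left, hye, hee, hs]
      field_simp
      ring
    have hhh : (inner ℝ hvec hvec : ℝ) = β - γ ^ 2 / α := by
      have h1 : (inner ℝ hvec hvec : ℝ) = inner ℝ hvec y - s * inner ℝ hvec e := by
        rw [hhv, inner_sub_right, real_inner_smul_right]
      have hey : (inner ℝ e y : ℝ) = -γ := by rw [he_eq, inner_neg_left, ← hγ]
      have h2 : (inner ℝ hvec y : ℝ) = β - s * (-γ) := by
        rw [hhv, inner_sub_left, real_inner_smul_left, ← hβ, hey]
      rw [h1, h2, hhe, hs]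
      field_simp
      ring
    have hH0 : 0 < ‖hvec‖ := by
      rw [norm_pos_iff]
      intro h0
      rw [h0, inner_zero_left] at hhh
      have h1 : γ ^ 2 / α = β := by linarith
      have h2 : γ ^ 2 = α * β := by
        rw [← h1]; field_simp
      linarith [hG, h2]
    have hlow : ‖hvec‖ ≤ Metric.infDist c (lineThrough a (b - a)) := by
      have hne : (lineThrough a (b - a)).Nonempty := ⟨a, 0, by simp⟩
      rw [Metric.infDist_eq_iInf]
      have : Nonempty (lineThrough a (b - a)) := hne.to_subtype
      refine le_ciInf ?_
      rintro ⟨q, t', hq⟩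
      have hcq : c - q = hvec + (s - t') • e := by
        rw [hq, hhv, he, hy, sub_smul]
        abel
      have hdq : dist c q = ‖c - q‖ := dist_eq_norm c q
      rw [hdq, hcq]
      have hsq : ‖hvec‖ ^ 2 ≤ ‖hvec + (s - t') • e‖ ^ 2 :=
        norm_sq_le_add_perp hhe (s - t')
      exact le_of_pow_le_pow_left₀ two_ne_zero (norm_nonneg _) hsq
    have hww : w ^ 2 = α - (γ + α) ^ 2 / (β + 2*γ + α) := by
      rw [hw, ← real_inner_self_eq_norm_sq, hdd]
    have hhh2 : ‖hvec‖ ^ 2 = β - γ ^ 2 / α := by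
      rw [← real_inner_self_eq_norm_sq, hhh]
    have hkey : w ^ 2 < ‖hvec‖ ^ 2 := by
      rw [hww, hhh2]
      have e1 : α - (γ + α)^2 / (β + 2*γ + α) = (α*β - γ^2) / (β + 2*γ + α) := by
        field_simp; ring
      have e2 : β - γ^2 / α = (α*β - γ^2) / α := by
        field_simp
      rw [e1, e2]
      apply div_lt_div_of_pos_left hG hα0
      linarith
    have := lt_of_pow_lt_pow_left₀ 2 (norm_nonneg hvec) hkey
    linarith
end
end

section
/- For all real numbers w, d with 0 < w ≤ d and every ε ∈ (0, 1], setting β = arcsin(min{ε·w/(6d), 1}) and γ = β + arcsin(min{1, w/d}), one has γ/β ≤ 1 + 3π/ε. -/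
open Set Metric

noncomputable section

/-- For `0 < w ≤ d` and `ε ∈ (0, 1]`, with
`β = arcsin(min(εw/(6d), 1))` and `γ = β + arcsin(min(1, w/d))`, one has
`γ/β ≤ 1 + 3π/ε`. -/
theorem statement13 (w d ε : ℝ) (hw : 0 < w) (hwd : w ≤ d)
    (hε : ε ∈ Set.Ioc (0 : ℝ) 1)
    (β γ : ℝ)
    (hβ : β = Real.arcsin (min (ε * w / (6 * d)) 1))
    (hγ : γ = β + Real.arcsin (min 1 (w / d))) :
    γ / β ≤ 1 + 3 * Real.pi / ε := by
  obtain ⟨hε0, hε1⟩ := hε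
  have hd : 0 < d := hw.trans_le hwd
  have hr0 : 0 < w / d := div_pos hw hd
  have hr1 : w / d ≤ 1 := (div_le_one hd).2 hwd
  set s := ε * w / (6 * d) with hs
  have hs0 : 0 < s := by positivity
  have hs' : s = ε * (w/d) / 6 := by rw [hs]; field_simp
  have hs1 : s ≤ 1/6 := by
    rw [hs']
    nlinarith
  have hmin : min s 1 = s := min_eq_left (by linarith)
  have hmin2 : min 1 (w/d) = w/d := min_eq_right hr1
  rw [hmin] at hβ
  rw [hmin2] at hγ
  -- β ≥ s
  have hβge : s ≤ β := by
    rw [hβ]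
    rw [Real.le_arcsin_iff_sin_le ⟨by linarith [Real.pi_gt_three], by linarith [Real.pi_gt_three]⟩ ⟨by linarith, by linarith⟩]
    exact Real.sin_le hs0.le
  have hβ0 : 0 < β := lt_of_lt_of_le hs0 hβge
  -- arcsin (w/d) ≤ (π/2) * (w/d)
  have hA : Real.arcsin (w/d) ≤ Real.pi/2 * (w/d) := by
    rw [Real.arcsin_le_iff_le_sin ⟨by linarith, hr1⟩
      ⟨by nlinarith [Real.pi_pos], by nlinarith [Real.pi_pos]⟩]
    have := Real.mul_le_sin (x := Real.pi/2 * (w/d)) (by positivity)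
      (by nlinarith [Real.pi_pos])
    calc w/d = 2/Real.pi * (Real.pi/2 * (w/d)) := by
          field_simp
      _ ≤ _ := this
  have key : Real.arcsin (w/d) ≤ (3 * Real.pi / ε) * β := by
    have h1 : Real.pi/2 * (w/d) = (3 * Real.pi / ε) * s := by
      rw [hs']; field_simp; ring
    have h2 : (3 * Real.pi / ε) * s ≤ (3 * Real.pi / ε) * β :=
      mul_le_mul_of_nonneg_left hβge (by positivity)
    linarith
  rw [hγ, add_div, div_self hβ0.ne', add_le_add_iff_left, div_le_iff₀ hβ0]
  linarith
end
end
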